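/- Let G be a finite group, A ⊴ G with A = Q₁ × ⋯ × Qₜ permuted transitively by conjugation, and C ≤ G cyclic with G/A a Frobenius group with complement CA/A and cyclic kernel. Set G₁ = N_G(Q₁) and C₁ = C ∩ G₁, and assume G₁/A = C₁K₁ for a subgroup K₁ of the Frobenius kernel of G/A. If U₁ ≤ Q₁ is C₁-invariant and G₁-intravariant in Q₁, then the coset representatives ĝ_Z ∈ Z (for Z ∈ G₁\G) can be chosen so that U = ∏_Z U₁^{ĝ_Z} is invariant under conjugation by C. -/

import Mathlib

open Pointwise

/-- Conjugation of a subgroup: `conjS g H = g H g⁻¹`. -/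
def conjS {G : Type*} [Group G] (g : G) (H : Subgroup G) : Subgroup G :=
  H.map (MulAut.conj g).toMonoidHom

section ConjS
variable {G : Type*} [Group G]

lemma conjS_one (H : Subgroup G) : conjS (1 : G) H = H := by
  ext x; simp [conjS]

lemma conjS_mul (a b : G) (H : Subgroup G) :
    conjS (a * b) H = conjS a (conjS b H) := by
  simp only [conjS, Subgroup.map_map]
  congr 1
  ext x
  simp [mul_assoc]

lemma mem_conjS {g x : G} {H : Subgroup G} : x ∈ conjS g H ↔ g⁻¹ * x * g ∈ H := by
  constructor
  · rintro ⟨y, hy, rfl⟩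
    simpa [mul_assoc] using hy
  · intro h
    exact ⟨g⁻¹ * x * g, h, by simp [mul_assoc]⟩

end ConjS

/-- A subgroup of a finite cyclic normal subgroup is normal. -/
lemma normal_of_le_cyclic {Γ : Type*} [Group Γ] [Finite Γ] (K N : Subgroup Γ) [hKn : K.Normal]
    (hc : IsCyclic ↥K) (hNK : N ≤ K) : N.Normal := by
  classical
  haveI : Fintype ↥K := Fintype.ofFinite _
  set d := Nat.card ↥N with hd
  have hd0 : 0 < d := Nat.card_pos
  have hpow : ∀ x ∈ N, x ^ d = 1 := by
    intro x hx
    have h1 : (⟨x, hx⟩ : ↥N) ^ d = 1 := pow_card_eq_one'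
    have := congrArg (Subtype.val) h1
    simpa using this
  have hmem : ∀ x : Γ, x ∈ K → x ^ d = 1 → x ∈ N := by
    intro x hxK hxd
    set T : Finset ↥K := Finset.univ.filter (fun a : ↥K => a ^ d = 1) with hT
    have hcard : T.card ≤ d := IsCyclic.card_pow_eq_one_le hd0
    set S : Finset ↥K := Finset.univ.filter (fun a : ↥K => a ∈ N.subgroupOf K) with hS
    have hST : S ⊆ T := by
      intro y hy
      simp only [hS, hT, Finset.mem_filter, Finset.mem_univ, true_and] at hy ⊢
      have := hpow _ ((Subgroup.mem_subgroupOf).mp hy)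
      exact Subtype.ext (by simpa using this)
    have hScard : d ≤ S.card := by
      have h1 : Nat.card ↥(N.subgroupOf K) = d :=
        Nat.card_congr (Subgroup.subgroupOfEquivOfLe hNK).toEquiv
      have h2 : Nat.card ↥(N.subgroupOf K) = S.card := by
        rw [Nat.card_eq_fintype_card]
        simpa [hS] using (Fintype.card_subtype (fun a : ↥K => a ∈ N.subgroupOf K))
      omega
    have hTS : T = S := (Finset.eq_of_subset_of_card_le hST (le_trans hcard hScard)).symm
    have hxT : (⟨x, hxK⟩ : ↥K) ∈ T := by
      simp only [hT, Finset.mem_filter, Finset.mem_univ, true_and]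
      exact Subtype.ext (by simpa using hxd)
    rw [hTS] at hxT
    simp only [hS, Finset.mem_filter, Finset.mem_univ, true_and] at hxT
    exact (Subgroup.mem_subgroupOf).mp hxT
  constructor
  intro n hn g
  refine hmem _ (hKn.conj_mem n (hNK hn) g) ?_
  rw [conj_pow, hpow n hn]
  simp


section Cact
variable {G : Type*} [Group G] (H : Subgroup G)

/-- Right multiplication action on right cosets. -/
def cact (u : G) : Quotient (QuotientGroup.rightRel H) → Quotient (QuotientGroup.rightRel H) :=
  Quotient.map' (fun g => g * u) (by
    intro a b hab
    have hab' : b * a⁻¹ ∈ H := (QuotientGroup.rightRel_apply).mp hab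
    refine (QuotientGroup.rightRel_apply).mpr ?_
    simpa [mul_assoc] using hab')

lemma cact_mk (u g : G) :
    cact H u (Quotient.mk'' g) = Quotient.mk'' (g * u) := rfl

lemma cact_cact (u v : G) (Z : Quotient (QuotientGroup.rightRel H)) :
    cact H v (cact H u Z) = cact H (u * v) Z := by
  induction Z using Quotient.inductionOn' with
  | h g => simp [cact_mk, mul_assoc]

lemma cact_one (Z : Quotient (QuotientGroup.rightRel H)) : cact H 1 Z = Z := by
  induction Z using Quotient.inductionOn' with
  | h g => simp [cact_mk]

lemma cact_injective (u : G) : Function.Injective (cact H u) := by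
  intro Z Z' h
  have := congrArg (cact H u⁻¹) h
  simpa [cact_cact, cact_one] using this

lemma cact_surjective (u : G) : Function.Surjective (cact H u) := by
  intro Z
  exact ⟨cact H u⁻¹ Z, by simp [cact_cact, cact_one]⟩

lemma mk''_eq_mk'' {g g' : G} :
    (Quotient.mk'' g : Quotient (QuotientGroup.rightRel H)) = Quotient.mk'' g' ↔
      g' * g⁻¹ ∈ H := by
  rw [Quotient.eq'']
  exact QuotientGroup.rightRel_apply

end Cact

lemma key_conj {G : Type*} [Group G] [Finite G]
    (A : Subgroup G) [A.Normal] (C : Subgroup G)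
    (hCA : C ⊓ A = ⊥)
    (Kbar : Subgroup (G ⧸ A)) [hKn : Kbar.Normal] (hKcyc : IsCyclic ↥Kbar)
    (h1 : C.map (QuotientGroup.mk' A) ⊓ Kbar = ⊥)
    (h2 : C.map (QuotientGroup.mk' A) ⊔ Kbar = ⊤)
    (hfrob : ∀ c ∈ C.map (QuotientGroup.mk' A), c ≠ 1 →
      ∀ k ∈ Kbar, k ≠ 1 → c * k * c⁻¹ ≠ k)
    (K₁bar : Subgroup (G ⧸ A)) (hK₁ : K₁bar ≤ Kbar)
    (G₁ : Subgroup G) (hAG₁ : A ≤ G₁)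
    (hG₁ : G₁.map (QuotientGroup.mk' A) = (C ⊓ G₁).map (QuotientGroup.mk' A) ⊔ K₁bar)
    (hCcomm : ∀ x ∈ C, ∀ y ∈ C, x * y = y * x)
    {c₀ : G} (hc₀C : c₀ ∈ C) (g₀ : G) (hh : g₀ * c₀ * g₀⁻¹ ∈ G₁) :
    ∃ g₁ : G, g₁ * g₀⁻¹ ∈ G₁ ∧ g₁ * c₀ * g₁⁻¹ = c₀ := by
  by_cases hc₀1 : c₀ = 1
  · exact ⟨g₀, by simpa using G₁.one_mem, by simp [hc₀1]⟩
  set π := QuotientGroup.mk' A with hπ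
  have hA1 : ∀ x : G, π x = 1 ↔ x ∈ A := by
    intro x
    rw [hπ, QuotientGroup.mk'_apply, QuotientGroup.eq_one_iff]
  have hπc₀ : π c₀ ≠ 1 := by
    intro h
    have hmem : c₀ ∈ C ⊓ A := ⟨hc₀C, (hA1 c₀).mp h⟩
    rw [hCA] at hmem
    exact hc₀1 (Subgroup.mem_bot.mp hmem)
  haveI hK₁n : K₁bar.Normal := normal_of_le_cyclic Kbar K₁bar hKcyc hK₁
  have hπh : π (g₀ * c₀ * g₀⁻¹) ∈ (C ⊓ G₁).map π ⊔ K₁bar := by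
    rw [← hG₁]; exact ⟨_, hh, rfl⟩
  have hπh' : π (g₀ * c₀ * g₀⁻¹) ∈ (((C ⊓ G₁).map π : Subgroup (G ⧸ A)) : Set (G ⧸ A)) * (K₁bar : Set (G ⧸ A)) := by
    rw [← Subgroup.mul_normal]; exact hπh
  obtain ⟨c1, hc1, k1, hk1, hprod'⟩ := hπh'
  have hprod : c1 * k1 = π (g₀ * c₀ * g₀⁻¹) := hprod'
  have hc1C : c1 ∈ C.map π := Subgroup.map_mono inf_le_left hc1
  have hc1ne : c1 ≠ 1 := by
    rintro rfl
    have hhK : π (g₀ * c₀ * g₀⁻¹) ∈ Kbar := by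
      rw [← hprod, one_mul]; exact hK₁ hk1
    have hc₀K : π c₀ ∈ Kbar := by
      have hc := hKn.conj_mem _ hhK (π g₀)⁻¹
      have e : (π g₀)⁻¹ * π (g₀ * c₀ * g₀⁻¹) * ((π g₀)⁻¹)⁻¹ = π c₀ := by
        simp only [map_mul, map_inv]; group
      rwa [e] at hc
    have hmem : π c₀ ∈ C.map π ⊓ Kbar := ⟨⟨c₀, hc₀C, rfl⟩, hc₀K⟩
    rw [h1] at hmem
    exact hπc₀ (Subgroup.mem_bot.mp hmem)
  -- the twisted map on K₁bar
  set f : ↥K₁bar → ↥K₁bar := fun y => ⟨c1⁻¹ * (↑y)⁻¹ * c1 * ↑y, by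
    have hmem : c1⁻¹ * (↑y)⁻¹ * c1 ∈ K₁bar := by
      have := hK₁n.conj_mem (↑y)⁻¹ (K₁bar.inv_mem y.2) c1⁻¹
      simpa [mul_assoc] using this
    exact mul_mem hmem y.2⟩ with hf
  have hinj : Function.Injective f := by
    intro y y' h
    have h' : c1⁻¹ * (↑y)⁻¹ * c1 * ↑y = c1⁻¹ * (↑y')⁻¹ * c1 * ↑y' := congrArg Subtype.val h
    have h'' : (↑y : G ⧸ A)⁻¹ * c1 * ↑y = (↑y' : G ⧸ A)⁻¹ * c1 * ↑y' := by
      have := congrArg (fun z => c1 * z) h'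
      simpa [mul_assoc] using this
    by_cases hw : (↑y' : G ⧸ A) * (↑y)⁻¹ = 1
    · ext
      have : (↑y' : G ⧸ A) = ↑y := by
        have := congrArg (fun z => z * (↑y : G ⧸ A)) hw
        simpa [mul_assoc] using this
      exact this.symm
    · exfalso
      apply hfrob c1 hc1C hc1ne (↑y' * (↑y)⁻¹)
        (mul_mem (hK₁ y'.2) (Kbar.inv_mem (hK₁ y.2))) hw
      have e1 : (↑y' : G ⧸ A) * (↑y)⁻¹ * c1 * ((↑y' : G ⧸ A) * (↑y)⁻¹)⁻¹ = c1 := by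
        have := congrArg (fun z => (↑y' : G ⧸ A) * z * (↑y' : G ⧸ A)⁻¹) h''
        simp only [mul_assoc] at this ⊢
        group at this ⊢
        rw [this]
      -- from w c1 w⁻¹ = c1 conclude c1 w c1⁻¹ = w
      have e2 : ((↑y' : G ⧸ A) * (↑y)⁻¹) * c1 = c1 * ((↑y' : G ⧸ A) * (↑y)⁻¹) := by
        have := congrArg (fun z => z * ((↑y' : G ⧸ A) * (↑y)⁻¹)) e1
        simpa [mul_assoc] using this
      have := congrArg (fun z => c1 * z * c1⁻¹) e2.symm
      simpa [mul_assoc] using this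
  obtain ⟨y, hy⟩ := (Finite.injective_iff_surjective.mp hinj) ⟨k1, hk1⟩
  have hy' : c1⁻¹ * (↑y)⁻¹ * c1 * ↑y = k1 := congrArg Subtype.val hy
  have hyK : (↑y : G ⧸ A) ∈ K₁bar := y.2
  have hconj : ↑y * π (g₀ * c₀ * g₀⁻¹) * (↑y)⁻¹ = c1 := by
    rw [← hprod, ← hy']; group
  -- decompose π g₀ = kb * π d
  have hg₀top : π g₀ ∈ Kbar ⊔ C.map π := by
    rw [sup_comm, h2]; trivial
  have hg₀top' : π g₀ ∈ ((Kbar : Set (G ⧸ A)) * (C.map π : Set (G ⧸ A))) := by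
    rw [← Subgroup.normal_mul]; exact hg₀top
  obtain ⟨kb, hkb, db, hdb, hkd'⟩ := hg₀top'
  have hkd : kb * db = π g₀ := hkd'
  clear hkd'
  obtain ⟨d, hdC, rfl⟩ := hdb
  have hdc₀ : π d * π c₀ * (π d)⁻¹ = π c₀ := by
    rw [← map_inv, ← map_mul, ← map_mul]
    congr 1
    rw [hCcomm d hdC c₀ hc₀C]; group
  have hπh2 : π (g₀ * c₀ * g₀⁻¹) = kb * π c₀ * kb⁻¹ := by
    have e1 : π (g₀ * c₀ * g₀⁻¹) = π g₀ * π c₀ * (π g₀)⁻¹ := by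
      simp [map_mul]
    rw [e1, ← hkd]
    have e2 : kb * π d * π c₀ * (kb * π d)⁻¹ = kb * (π d * π c₀ * (π d)⁻¹) * kb⁻¹ := by
      group
    rw [e2, hdc₀]
  have hwconj : (↑y * kb) * π c₀ * (↑y * kb)⁻¹ = c1 := by
    rw [← hconj, hπh2]; group
  have hwK : (↑y : G ⧸ A) * kb ∈ Kbar := mul_mem (hK₁ hyK) hkb
  have hc1c₀ : c1 = π c₀ := by
    have hmem : c1 * (π c₀)⁻¹ ∈ C.map π ⊓ Kbar := by
      constructor
      · exact mul_mem hc1C (Subgroup.inv_mem _ ⟨c₀, hc₀C, rfl⟩)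
      · rw [← hwconj]
        have e : (↑y * kb) * π c₀ * (↑y * kb)⁻¹ * (π c₀)⁻¹
            = (↑y * kb) * (π c₀ * (↑y * kb)⁻¹ * (π c₀)⁻¹) := by group
        rw [e]
        refine mul_mem hwK ?_
        have := hKn.conj_mem _ (Kbar.inv_mem hwK) (π c₀)
        simpa [mul_assoc] using this
    rw [h1] at hmem
    exact mul_inv_eq_one.mp (Subgroup.mem_bot.mp hmem)
  have hw1 : (↑y : G ⧸ A) * kb = 1 := by
    by_contra hw
    apply hfrob (π c₀) ⟨c₀, hc₀C, rfl⟩ hπc₀ _ hwK hw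
    have h' : (↑y * kb) * π c₀ * (↑y * kb)⁻¹ = π c₀ := by rw [hwconj, hc1c₀]
    have e2 : ((↑y : G ⧸ A) * kb) * π c₀ = π c₀ * (↑y * kb) := by
      have := congrArg (fun z => z * ((↑y : G ⧸ A) * kb)) h'
      simpa [mul_assoc] using this
    have := congrArg (fun z => π c₀ * z * (π c₀)⁻¹) e2.symm
    simpa [mul_assoc] using this
  have hkb' : kb = (↑y : G ⧸ A)⁻¹ := by
    have := congrArg (fun z => (↑y : G ⧸ A)⁻¹ * z) hw1
    simpa [mul_assoc] using this
  have hkbG₁ : kb ∈ G₁.map π := by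
    rw [hG₁, hkb']
    exact (le_sup_right : K₁bar ≤ _) (K₁bar.inv_mem hyK)
  obtain ⟨b, hbG₁, hbk⟩ := hkbG₁
  have hz : g₀ * (b * d)⁻¹ ∈ A := by
    rw [← hA1]
    have : π (g₀ * (b * d)⁻¹) = π g₀ * (π b * π d)⁻¹ := by simp [map_mul]
    rw [this, hbk, hkd]
    simp
  refine ⟨d, ?_, ?_⟩
  · have e : d * g₀⁻¹ = b⁻¹ * (g₀ * (b * d)⁻¹)⁻¹ := by group
    rw [e]
    exact mul_mem (G₁.inv_mem hbG₁) (G₁.inv_mem (hAG₁ hz))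
  · rw [hCcomm d hdC c₀ hc₀C]; group

theorem stmt18 {G : Type*} [Group G] [Finite G] {t : ℕ} (ht : 0 < t)
    (Q : Fin t → Subgroup G) (A : Subgroup G) [A.Normal]
    (hle : ∀ i, Q i ≤ A) (hsupA : A = ⨆ i, Q i)
    (hind : iSupIndep Q)
    (hcomm : ∀ i j, i ≠ j → ∀ x ∈ Q i, ∀ y ∈ Q j, x * y = y * x)
    (hperm : ∀ g : G, ∀ i, ∃ j, conjS g (Q i) = Q j)
    (htrans : ∀ i j, ∃ g : G, conjS g (Q i) = Q j)
    (C : Subgroup G) (hCcyc : IsCyclic ↥C) (hCA : C ⊓ A = ⊥)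
    (Kbar : Subgroup (G ⧸ A)) [Kbar.Normal] (hKcyc : IsCyclic ↥Kbar)
    (hKnt : Kbar ≠ ⊥)
    (h1 : C.map (QuotientGroup.mk' A) ⊓ Kbar = ⊥)
    (h2 : C.map (QuotientGroup.mk' A) ⊔ Kbar = ⊤)
    (hfrob : ∀ c ∈ C.map (QuotientGroup.mk' A), c ≠ 1 →
      ∀ k ∈ Kbar, k ≠ 1 → c * k * c⁻¹ ≠ k)
    (K₁bar : Subgroup (G ⧸ A)) (hK₁ : K₁bar ≤ Kbar)
    (hG₁ : (Subgroup.normalizer (Q ⟨0, ht⟩ : Set G)).map (QuotientGroup.mk' A)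
        = (C ⊓ (Subgroup.normalizer (Q ⟨0, ht⟩ : Set G))).map (QuotientGroup.mk' A) ⊔ K₁bar)
    (U₁ : Subgroup G) (hU₁ : U₁ ≤ Q ⟨0, ht⟩)
    (hCinv : ∀ c ∈ C ⊓ (Subgroup.normalizer (Q ⟨0, ht⟩ : Set G)), conjS c U₁ = U₁)
    (hintra : ∀ g ∈ (Subgroup.normalizer (Q ⟨0, ht⟩ : Set G)),
      ∃ q ∈ Q ⟨0, ht⟩, conjS g⁻¹ U₁ = conjS q⁻¹ U₁) :
    ∃ rep : Quotient (QuotientGroup.rightRel (Subgroup.normalizer (Q ⟨0, ht⟩ : Set G))) → G,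
      (∀ Z, Quotient.mk'' (rep Z) = Z) ∧
      ∀ c ∈ C, conjS c (⨆ Z, conjS (rep Z)⁻¹ U₁) = ⨆ Z, conjS (rep Z)⁻¹ U₁ := by
  classical
  set G₁ := Subgroup.normalizer (Q ⟨0, ht⟩ : Set G) with hG₁def
  -- A ≤ G₁
  have hAG₁ : A ≤ G₁ := by
    rw [hsupA]
    refine iSup_le fun i => ?_
    by_cases hi : i = ⟨0, ht⟩
    · subst hi; exact Subgroup.le_normalizer
    · intro x hx
      rw [Subgroup.mem_normalizer_iff]
      intro q
      constructor
      · intro hq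
        have := hcomm i ⟨0, ht⟩ hi x hx q hq
        have e : x * q * x⁻¹ = q := by
          rw [this]; group
        rw [e]; exact hq
      · intro hq
        have hc' := hcomm i ⟨0, ht⟩ hi x hx _ hq
        have e : x * q * x⁻¹ = q := by
          have h2 : x⁻¹ * (x * (x * q * x⁻¹)) = x⁻¹ * ((x * q * x⁻¹) * x) := by rw [hc']
          calc x * q * x⁻¹ = x⁻¹ * (x * (x * q * x⁻¹)) := by group
            _ = x⁻¹ * ((x * q * x⁻¹) * x) := h2
            _ = q := by group
        rw [← e]; exact hq
  -- cyclic generator of C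
  obtain ⟨γ, hγ⟩ := IsCyclic.exists_generator (α := ↥C)
  set c : G := ↑γ with hcdef
  have hcC : c ∈ C := γ.2
  have hgen : ∀ x ∈ C, ∃ j : ℤ, c ^ j = x := by
    intro x hx
    obtain ⟨j, hj⟩ := hγ ⟨x, hx⟩
    exact ⟨j, by simpa using congrArg (Subtype.val) hj⟩
  have hCcomm : ∀ x ∈ C, ∀ y ∈ C, x * y = y * x := by
    intro x hx y hy
    obtain ⟨i, rfl⟩ := hgen x hx
    obtain ⟨j, rfl⟩ := hgen y hy
    exact Commute.zpow_zpow (Commute.refl c) i j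
  -- order of c
  set n := orderOf c with hn
  have hn0 : 0 < n := orderOf_pos c
  have hcn : c ^ n = 1 := pow_orderOf_eq_one c
  set X := Quotient (QuotientGroup.rightRel G₁) with hX
  -- minimal period of each coset under right translation by c
  have hmex : ∀ B : X, ∃ m : ℕ, (0 < m ∧ cact G₁ (c ^ m) B = B) ∧
      (∀ j : ℕ, cact G₁ (c ^ j) B = B → m ∣ j) := by
    intro B
    have hex : ∃ m : ℕ, 0 < m ∧ cact G₁ (c ^ m) B = B :=
      ⟨n, hn0, by rw [hcn, cact_one]⟩
    refine ⟨Nat.find hex, Nat.find_spec hex, ?_⟩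
    intro j
    induction j using Nat.strong_induction_on with
    | _ j ih =>
      intro hj
      rcases Nat.eq_zero_or_pos j with rfl | hj0
      · exact dvd_zero _
      · have hmj : Nat.find hex ≤ j := Nat.find_min' hex ⟨hj0, hj⟩
        set m := Nat.find hex with hm
        obtain ⟨hm0, hmB⟩ := Nat.find_spec hex
        rcases Nat.eq_or_lt_of_le hmj with heq' | hlt
        · exact heq' ▸ dvd_refl m
        · have hstep : cact G₁ (c ^ (j - m)) B = B := by
            have e : (c : G) ^ m * c ^ (j - m) = c ^ j := by
              rw [← pow_add]; congr 1; omega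
            calc cact G₁ (c ^ (j - m)) B
                = cact G₁ (c ^ (j - m)) (cact G₁ (c ^ m) B) := by rw [hmB]
              _ = cact G₁ (c ^ m * c ^ (j - m)) B := by rw [cact_cact]
              _ = cact G₁ (c ^ j) B := by rw [e]
              _ = B := hj
          obtain ⟨q, hq⟩ := ih (j - m) (by omega) hstep
          exact ⟨q + 1, by rw [Nat.mul_succ, ← hq]; omega⟩
  choose mf hmf1 hmfdvd using hmex
  have hmf0 : ∀ B : X, 0 < mf B := fun B => (hmf1 B).1
  have hmfB : ∀ B : X, cact G₁ (c ^ mf B) B = B := fun B => (hmf1 B).2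
  -- divisibility from coincidence of translates
  have hdvd2 : ∀ B : X, ∀ a b : ℕ, cact G₁ (c ^ a) B = cact G₁ (c ^ b) B →
      (mf B : ℤ) ∣ (a : ℤ) - b := by
    have haux : ∀ B : X, ∀ a b : ℕ, b ≤ a → cact G₁ (c ^ a) B = cact G₁ (c ^ b) B →
        (mf B : ℤ) ∣ (a : ℤ) - b := by
      intro B a b hba heq
      have e : (c : G) ^ (a - b) * c ^ b = c ^ a := by
        rw [← pow_add]; congr 1; omega
      have h3 : cact G₁ (c ^ b) (cact G₁ (c ^ (a - b)) B) = cact G₁ (c ^ b) B := by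
        rw [cact_cact, e, heq]
      have h4 : cact G₁ (c ^ (a - b)) B = B := cact_injective G₁ (c ^ b) h3
      obtain ⟨q, hq⟩ := hmfdvd B (a - b) h4
      refine ⟨(q : ℤ), ?_⟩
      have e2 : (a : ℤ) - b = ((a - b : ℕ) : ℤ) := by omega
      rw [e2, hq]; push_cast; ring
    intro B a b heq
    rcases le_total b a with h | h
    · exact haux B a b h heq
    · have h5 := haux B b a h heq.symm
      rw [show (a : ℤ) - b = -((b : ℤ) - a) by ring]
      exact dvd_neg.mpr h5
  -- orbit equivalence and base points
  set r : X → X → Prop := fun Z Z' => ∃ k : ℕ, cact G₁ (c ^ k) Z = Z' with hr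
  have hrrefl : ∀ Z, r Z Z := fun Z => ⟨0, by rw [pow_zero, cact_one]⟩
  have hrtrans : ∀ {Z Z' Z''}, r Z Z' → r Z' Z'' → r Z Z'' := by
    rintro Z Z' Z'' ⟨k, hk⟩ ⟨l, hl⟩
    exact ⟨k + l, by rw [pow_add, ← cact_cact, hk, hl]⟩
  have hrsymm : ∀ {Z Z'}, r Z Z' → r Z' Z := by
    rintro Z Z' ⟨k, hk⟩
    refine ⟨k * (n - 1), ?_⟩
    rw [← hk, cact_cact, ← pow_add]
    have e : k + k * (n - 1) = n * k := by
      have e1 : k * (n - 1) + k = k * ((n - 1) + 1) := (Nat.mul_succ k (n - 1)).symm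
      have e2 : (n - 1) + 1 = n := Nat.succ_pred_eq_of_pos hn0
      calc k + k * (n - 1) = k * (n - 1) + k := by omega
        _ = k * ((n - 1) + 1) := e1
        _ = k * n := by rw [e2]
        _ = n * k := Nat.mul_comm _ _
    rw [e, pow_mul, hcn, one_pow, cact_one]
  letI s : Setoid X := ⟨r, ⟨fun Z => hrrefl Z, fun h => hrsymm h, fun h h' => hrtrans h h'⟩⟩
  set bf : X → X := fun Z => (Quotient.mk s Z).out with hbf
  have hbf1 : ∀ Z, r (bf Z) Z := by
    intro Z
    exact Quotient.exact (Quotient.out_eq (Quotient.mk s Z))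
  have hbf2 : ∀ Z Z', r Z Z' → bf Z = bf Z' := by
    intro Z Z' h
    have h6 : Quotient.mk s Z = Quotient.mk s Z' := Quotient.sound h
    rw [hbf]; simp only [h6]
  choose kf hkf using fun Z => hbf1 Z
  -- choice of coset representatives at base points using the key conjugacy lemma
  have hg : ∀ B : X, ∃ g₀ : G, Quotient.mk'' g₀ = B ∧ g₀ * c ^ mf B * g₀⁻¹ = c ^ mf B := by
    intro B
    obtain ⟨r₀, hr₀⟩ : ∃ r₀ : G, Quotient.mk'' r₀ = B := ⟨Quotient.out B, Quotient.out_eq B⟩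
    have hstab : r₀ * c ^ mf B * r₀⁻¹ ∈ G₁ := by
      have h3 : cact G₁ (c ^ mf B) (Quotient.mk'' r₀) = Quotient.mk'' r₀ := by
        rw [hr₀, hmfB]
      rw [cact_mk] at h3
      have h4 := (mk''_eq_mk'' G₁).mp h3
      have e : r₀ * c ^ mf B * r₀⁻¹ = (r₀ * (r₀ * c ^ mf B)⁻¹)⁻¹ := by group
      rw [e]; exact G₁.inv_mem h4
    obtain ⟨g₁, hg₁G₁, hg₁c⟩ := key_conj A C hCA Kbar hKcyc h1 h2 hfrob K₁bar hK₁ G₁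
      hAG₁ hG₁ hCcomm (pow_mem hcC (mf B)) r₀ hstab
    refine ⟨g₁, ?_, hg₁c⟩
    rw [← hr₀]
    have h7 : r₀ * g₁⁻¹ ∈ G₁ := by
      have := G₁.inv_mem hg₁G₁
      simpa [mul_inv_rev] using this
    exact (mk''_eq_mk'' G₁).mpr h7
  choose g0 hg0mk hg0c using hg
  -- c ^ mf B lies in G₁
  have hcmG₁ : ∀ B : X, c ^ mf B ∈ G₁ := by
    intro B
    rw [← hg0c B]
    have h3 : cact G₁ (c ^ mf B) (Quotient.mk'' (g0 B)) = Quotient.mk'' (g0 B) := by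
      rw [hg0mk, hmfB]
    rw [cact_mk] at h3
    have h4 := (mk''_eq_mk'' G₁).mp h3
    have e : g0 B * c ^ mf B * (g0 B)⁻¹ = (g0 B * (g0 B * c ^ mf B)⁻¹)⁻¹ := by group
    rw [e]; exact G₁.inv_mem h4
  -- bridging lemma
  have hbridge : ∀ B : X, ∀ j j' : ℤ, (mf B : ℤ) ∣ j - j' →
      conjS (g0 B * c ^ j)⁻¹ U₁ = conjS (g0 B * c ^ j')⁻¹ U₁ := by
    rintro B j j' ⟨sd, hs⟩
    have hconj : g0 B * c ^ ((mf B : ℤ) * sd) * (g0 B)⁻¹ = c ^ ((mf B : ℤ) * sd) := by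
      have h6 : (g0 B * c ^ mf B * (g0 B)⁻¹) ^ sd = (c ^ mf B) ^ sd := by rw [hg0c B]
      rw [conj_zpow] at h6
      have e7 : ((c : G) ^ mf B) ^ sd = c ^ ((mf B : ℤ) * sd) := by
        rw [← zpow_natCast c (mf B), ← zpow_mul]
      rw [e7] at h6
      exact h6
    have e8 : g0 B * c ^ j = c ^ ((mf B : ℤ) * sd) * (g0 B * c ^ j') := by
      have e5 : (c : G) ^ j = c ^ ((mf B : ℤ) * sd) * c ^ j' := by
        rw [← zpow_add]; congr 1; linarith [hs]
      calc g0 B * c ^ j = g0 B * (c ^ ((mf B : ℤ) * sd) * c ^ j') := by rw [e5]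
        _ = (g0 B * c ^ ((mf B : ℤ) * sd) * (g0 B)⁻¹) * (g0 B * c ^ j') := by group
        _ = c ^ ((mf B : ℤ) * sd) * (g0 B * c ^ j') := by rw [hconj]
    have e9 : (g0 B * c ^ j)⁻¹ = (g0 B * c ^ j')⁻¹ * (c ^ ((mf B : ℤ) * sd))⁻¹ := by
      rw [e8, mul_inv_rev]
    rw [e9, conjS_mul]
    have hfix : conjS ((c : G) ^ ((mf B : ℤ) * sd))⁻¹ U₁ = U₁ := by
      apply hCinv
      refine Subgroup.mem_inf.mpr ⟨C.inv_mem (zpow_mem hcC _), ?_⟩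
      refine Subgroup.inv_mem _ ?_
      have e10 : (c : G) ^ ((mf B : ℤ) * sd) = ((c : G) ^ mf B) ^ sd := by
        rw [zpow_mul, zpow_natCast]
      rw [e10]
      exact zpow_mem (hcmG₁ B) sd
    rw [hfix]
  -- the step lemma
  have hstep : ∀ Z : X, conjS c (conjS (g0 (bf Z) * c ^ kf Z)⁻¹ U₁)
      = conjS (g0 (bf (cact G₁ c⁻¹ Z)) * c ^ kf (cact G₁ c⁻¹ Z))⁻¹ U₁ := by
    intro Z
    have hbZ' : bf (cact G₁ c⁻¹ Z) = bf Z := by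
      apply hbf2
      exact ⟨1, by rw [pow_one, cact_cact, inv_mul_cancel, cact_one]⟩
    have h10 : cact G₁ (c ^ (kf (cact G₁ c⁻¹ Z) + 1)) (bf Z) = cact G₁ (c ^ kf Z) (bf Z) := by
      have h11 : cact G₁ (c ^ kf (cact G₁ c⁻¹ Z)) (bf Z) = cact G₁ c⁻¹ Z := by
        have := hkf (cact G₁ c⁻¹ Z)
        rwa [hbZ'] at this
      rw [pow_succ, ← cact_cact, h11, cact_cact, inv_mul_cancel, cact_one, hkf]
    have hdvd := hdvd2 (bf Z) (kf (cact G₁ c⁻¹ Z) + 1) (kf Z) h10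
    rw [← conjS_mul]
    have e : c * (g0 (bf Z) * c ^ kf Z)⁻¹ = (g0 (bf Z) * c ^ ((kf Z : ℤ) - 1))⁻¹ := by
      rw [mul_inv_rev, mul_inv_rev]
      rw [show ((c : G) ^ ((kf Z : ℤ) - 1))⁻¹ = c * (c ^ (kf Z : ℤ))⁻¹ by
        rw [← zpow_neg, ← zpow_neg]
        rw [show -((kf Z : ℤ) - 1) = 1 + -(kf Z : ℤ) by ring]
        rw [zpow_add, zpow_one]]
      rw [zpow_natCast]
      group
    rw [e]
    have hd2 : (mf (bf Z) : ℤ) ∣ ((kf Z : ℤ) - 1) - (kf (cact G₁ c⁻¹ Z) : ℤ) := by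
      obtain ⟨q, hq⟩ := hdvd
      refine ⟨-q, ?_⟩
      push_cast at hq ⊢
      linarith
    have := hbridge (bf Z) ((kf Z : ℤ) - 1) (kf (cact G₁ c⁻¹ Z) : ℤ) hd2
    rw [this, zpow_natCast, hbZ']
  -- conclusion
  refine ⟨fun Z => g0 (bf Z) * c ^ kf Z, ?_, ?_⟩
  · intro Z
    have h12 : (Quotient.mk'' (g0 (bf Z) * c ^ kf Z) : X)
        = cact G₁ (c ^ kf Z) (Quotient.mk'' (g0 (bf Z))) := by rw [cact_mk]
    rw [h12, hg0mk, hkf]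
  · set W : X → Subgroup G := fun Z => conjS (g0 (bf Z) * c ^ kf Z)⁻¹ U₁ with hW
    have hmapsup : ∀ u : G, conjS u (⨆ Z, W Z) = ⨆ Z, conjS u (W Z) := by
      intro u
      exact (Subgroup.gc_map_comap (MulAut.conj u).toMonoidHom).l_iSup
    have hfixc : conjS c (⨆ Z, W Z) = ⨆ Z, W Z := by
      rw [hmapsup]
      calc (⨆ Z, conjS c (W Z)) = ⨆ Z, W (cact G₁ c⁻¹ Z) := by
            refine iSup_congr fun Z => ?_
            exact hstep Z
        _ = ⨆ Z, W Z := Function.Surjective.iSup_comp (cact_surjective G₁ c⁻¹) W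
    have hfixcinv : conjS c⁻¹ (⨆ Z, W Z) = ⨆ Z, W Z := by
      conv_lhs => rw [← hfixc]
      rw [← conjS_mul, inv_mul_cancel, conjS_one]
    have hfixpow : ∀ x : G, conjS x (⨆ Z, W Z) = ⨆ Z, W Z →
        ∀ k : ℕ, conjS (x ^ k) (⨆ Z, W Z) = ⨆ Z, W Z := by
      intro x hx k
      induction k with
      | zero => rw [pow_zero, conjS_one]
      | succ k ih => rw [pow_succ, conjS_mul, hx, ih]
    intro c' hc'
    obtain ⟨j, rfl⟩ := hgen c' hc'
    rcases j with j | j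
    · simpa only [Int.ofNat_eq_coe, zpow_natCast] using hfixpow c hfixc j
    · simpa only [zpow_negSucc, ← inv_pow] using hfixpow c⁻¹ hfixcinv (j + 1)
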